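/- Let $U_1, U_2, U_3$ be subspaces of a vector space $V$ over a field $F$. Then the quadruple $(U_1, U_2, U_3, V)$, regarded as a representation of the quiver of type $D_4$ (three sources mapping into a central vertex, with injective structure maps), decomposes as a direct sum of indecomposable representations, each of which has central-vertex dimension at most $2$, and in which each $U_m$ has dimension at most $1$. -/

import Mathlib

open Module Submodule

section
variable {F V : Type*} [Field F] [AddCommGroup V] [Module F V]

lemma auxD4_span_le (v : V) : finrank F ↥(span F {v}) ≤ 1 := by
  by_cases h : v = 0
  · subst h
    rw [show ({(0:V)} : Set V) = ↑(⊥ : Submodule F V) by simp, Submodule.span_eq]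
    simp
  · exact le_of_eq (finrank_span_singleton h)

lemma auxD4_rel_compl {p q : Submodule F V} (h : p ≤ q) :
    ∃ r, r ≤ q ∧ Disjoint p r ∧ p ⊔ r = q := by
  obtain ⟨c, hc⟩ := Submodule.exists_isCompl (comap q.subtype p)
  have hmc : map q.subtype (comap q.subtype p) = p := by
    rw [Submodule.map_comap_subtype, inf_eq_right.mpr h]
  refine ⟨map q.subtype c, map_subtype_le q c, ?_, ?_⟩
  · rw [disjoint_iff, ← hmc, ← Submodule.map_inf _ q.injective_subtype,
      hc.disjoint.eq_bot, Submodule.map_bot]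
  · rw [← hmc, ← Submodule.map_sup, hc.codisjoint.eq_top, Submodule.map_top,
      Submodule.range_subtype]

lemma auxD4_compl_extend {L S : Submodule F V} (h : Disjoint L S) :
    ∃ q, IsCompl L q ∧ S ≤ q := by
  obtain ⟨c, hc⟩ := Submodule.exists_isCompl (L ⊔ S)
  refine ⟨S ⊔ c, ⟨?_, ?_⟩, le_sup_left⟩
  · rw [disjoint_iff, eq_bot_iff]
    have h1 : (S ⊔ c) ⊓ (L ⊔ S) = S := by
      rw [sup_inf_assoc_of_le c (le_sup_right : S ≤ L ⊔ S),
        (disjoint_iff.mp hc.disjoint.symm : c ⊓ (L ⊔ S) = ⊥), sup_bot_eq]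
    calc L ⊓ (S ⊔ c) ≤ L ⊓ ((S ⊔ c) ⊓ (L ⊔ S)) := by
          exact le_inf inf_le_left (le_inf inf_le_right (inf_le_left.trans le_sup_left))
      _ = L ⊓ S := by rw [h1]
      _ ≤ ⊥ := h.le_bot
  · rw [codisjoint_iff, ← sup_assoc, hc.codisjoint.eq_top]

lemma auxD4_line_split [FiniteDimensional F V] (U : Fin 3 → Submodule F V)
    {L S : Submodule F V} (hL1 : finrank F ↥L = 1) (hLS : Disjoint L S)
    (h : ∀ m, L ≤ U m ∨ U m ≤ S) :
    ∃ W₀ V'' : Submodule F V, IsCompl W₀ V'' ∧ W₀ ≠ ⊥ ∧ finrank F ↥W₀ ≤ 2 ∧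
      (∀ m, finrank F ↥(U m ⊓ W₀) ≤ 1) ∧ (∀ m, U m = (U m ⊓ W₀) ⊔ (U m ⊓ V'')) := by
  obtain ⟨q, hq, hSq⟩ := auxD4_compl_extend hLS
  refine ⟨L, q, hq, ?_, hL1.le.trans one_le_two, ?_, ?_⟩
  · intro hbot
    rw [hbot, finrank_bot] at hL1; exact one_ne_zero hL1.symm
  · intro m; exact (Submodule.finrank_mono inf_le_right).trans hL1.le
  · intro m
    rcases h m with hm | hm
    · have h1 : U m ⊓ L = L := inf_eq_right.mpr hm
      have h2 : U m = (L ⊔ q) ⊓ U m := by rw [hq.codisjoint.eq_top, top_inf_eq]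
      rw [h1]
      conv_lhs => rw [h2, sup_inf_assoc_of_le q hm, inf_comm q (U m)]
    · have h1 : U m ⊓ q = U m := inf_eq_left.mpr (hm.trans hSq)
      rw [h1]; exact (sup_eq_right.mpr inf_le_left).symm

lemma auxD4_vec_split [FiniteDimensional F V] (U : Fin 3 → Submodule F V)
    {v : V} {S : Submodule F V} (hv0 : v ≠ 0) (hvS : v ∉ S)
    (h : ∀ m, v ∈ U m ∨ U m ≤ S) :
    ∃ W₀ V'' : Submodule F V, IsCompl W₀ V'' ∧ W₀ ≠ ⊥ ∧ finrank F ↥W₀ ≤ 2 ∧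
      (∀ m, finrank F ↥(U m ⊓ W₀) ≤ 1) ∧ (∀ m, U m = (U m ⊓ W₀) ⊔ (U m ⊓ V'')) :=
  auxD4_line_split U (finrank_span_singleton hv0)
    (((Submodule.disjoint_span_singleton' hv0).mpr hvS).symm)
    (fun m => (h m).imp (fun hv => (Submodule.span_singleton_le_iff_mem v _).mpr hv) id)

lemma auxD4_plane_split [FiniteDimensional F V] (hV : finrank F V ≠ 0)
    (A B C : Submodule F V)
    (cAB : IsCompl A B) (cAC : IsCompl A C) (cBC : IsCompl B C) :
    ∃ W₀ V'' : Submodule F V, IsCompl W₀ V'' ∧ W₀ ≠ ⊥ ∧ finrank F ↥W₀ ≤ 2 ∧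
      (finrank F ↥(A ⊓ W₀) ≤ 1 ∧ finrank F ↥(B ⊓ W₀) ≤ 1 ∧ finrank F ↥(C ⊓ W₀) ≤ 1) ∧
      (A = (A ⊓ W₀) ⊔ (A ⊓ V'') ∧ B = (B ⊓ W₀) ⊔ (B ⊓ V'') ∧
        C = (C ⊓ W₀) ⊔ (C ⊓ V'')) := by
  have hAB := Submodule.finrank_add_eq_of_isCompl cAB
  have hAC := Submodule.finrank_add_eq_of_isCompl cAC
  have hBC := Submodule.finrank_add_eq_of_isCompl cBC
  -- all dims are equal
  have hdB : finrank F ↥B ≠ 0 := by omega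
  have hBne : B ≠ ⊥ := by
    intro hb; rw [hb, finrank_bot] at hdB; exact hdB rfl
  obtain ⟨x, hxB, hx0⟩ := Submodule.exists_mem_ne_zero_of_ne_bot hBne
  set proj := Submodule.linearProjOfIsCompl A C cAC with hproj
  set g : V →ₗ[F] V := A.subtype ∘ₗ proj with hg
  have key1 : ∀ w : V, g w ∈ A := fun w => (proj w).2
  have key2 : ∀ w : V, w - g w ∈ C := by
    intro w
    rw [← Submodule.linearProjOfIsCompl_apply_eq_zero_iff cAC, map_sub]
    have : proj (g w) = proj w := Submodule.linearProjOfIsCompl_apply_left cAC (proj w)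
    exact sub_eq_zero.mpr this.symm
  have ginj : ∀ w ∈ B, g w = 0 → w = 0 := by
    intro w hw h0
    have : proj w = 0 := by
      have := congrArg (Subtype.val) (show proj w = (0 : A) from Subtype.ext h0)
      exact Subtype.ext h0
    have hwC : w ∈ C := (Submodule.linearProjOfIsCompl_apply_eq_zero_iff cAC).mp this
    have : w ∈ B ⊓ C := ⟨hw, hwC⟩
    rwa [cBC.disjoint.eq_bot, Submodule.mem_bot] at this
  set h' : V →ₗ[F] V := g - LinearMap.id with hh'
  have keyh : ∀ w : V, h' w = g w - w := fun w => rfl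
  have keyhC : ∀ w : V, h' w ∈ C := by
    intro w; rw [keyh]
    have := C.neg_mem (key2 w); rwa [neg_sub] at this
  have hinj : ∀ w ∈ B, h' w = 0 → w = 0 := by
    intro w hw h0
    rw [keyh, sub_eq_zero] at h0
    have : w ∈ A ⊓ B := ⟨h0 ▸ key1 w, hw⟩
    rwa [cAB.disjoint.eq_bot, Submodule.mem_bot] at this
  -- finrank of images of submodules of B
  have hmapfin : ∀ (f : V →ₗ[F] V), (∀ w ∈ B, f w = 0 → w = 0) →
      ∀ p : Submodule F V, p ≤ B → finrank F ↥(map f p) = finrank F ↥p := by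
    intro f hf p hp
    have hr : map f p = LinearMap.range (f ∘ₗ p.subtype) := by
      rw [LinearMap.range_comp, Submodule.range_subtype]
    rw [hr]
    refine LinearMap.finrank_range_of_inj ?_
    rw [← LinearMap.ker_eq_bot, eq_bot_iff]
    intro y hy
    have : f (y : V) = 0 := hy
    have h0 : (y : V) = 0 := hf _ (hp y.2) this
    simpa [Submodule.mem_bot] using Subtype.ext h0
  have hgB : map g B = A := by
    refine Submodule.eq_of_le_of_finrank_eq ?_ ?_
    · rintro z ⟨w, hw, rfl⟩; exact key1 w
    · rw [hmapfin g ginj B le_rfl]; omega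
  have hhB : map h' B = C := by
    refine Submodule.eq_of_le_of_finrank_eq ?_ ?_
    · rintro z ⟨w, hw, rfl⟩; exact keyhC w
    · rw [hmapfin h' hinj B le_rfl]; omega
  -- relative complement of the line spanned by x in B
  have hxle : span F {x} ≤ B := (Submodule.span_singleton_le_iff_mem x B).mpr hxB
  obtain ⟨B', hB'le, hB'disj, hB'sup⟩ := auxD4_rel_compl hxle
  set W₀ : Submodule F V := span F {x, g x} with hW₀
  set V'' : Submodule F V := B' ⊔ map g B' with hV''
  have hspl : W₀ = span F {x} ⊔ span F {g x} := Submodule.span_insert x {g x}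
  have hxW : x ∈ W₀ := subset_span (by simp)
  have hgxW : g x ∈ W₀ := subset_span (by simp)
  have hxleW : span F {x} ≤ W₀ := span_mono (by simp)
  have hgxleW : span F {g x} ≤ W₀ := span_mono (by simp)
  have hsplg : map g (span F {x}) = span F {g x} := by
    rw [Submodule.map_span, Set.image_singleton]
  have hsplh : map h' (span F {x}) = span F {h' x} := by
    rw [Submodule.map_span, Set.image_singleton]
  have hBle : B ≤ W₀ ⊔ V'' := by
    rw [← hB'sup]
    exact sup_le (hxleW.trans le_sup_left)
      ((le_sup_left : B' ≤ V'').trans le_sup_right)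
  have hAle : A ≤ W₀ ⊔ V'' := by
    rw [← hgB, ← hB'sup, Submodule.map_sup, hsplg]
    exact sup_le (hgxleW.trans le_sup_left)
      ((le_sup_right : map g B' ≤ V'').trans le_sup_right)
  have hsupTop : W₀ ⊔ V'' = ⊤ := by
    rw [← top_le_iff, ← cAB.codisjoint.eq_top]
    exact sup_le hAle hBle
  have hfrx : finrank F ↥(span F {x}) = 1 := finrank_span_singleton hx0
  have hfrB' : 1 + finrank F ↥B' = finrank F ↥B := by
    rw [← hfrx, ← Submodule.finrank_sup_add_finrank_inf_eq, hB'sup,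
      disjoint_iff.mp hB'disj, finrank_bot, add_zero]
  have hfrmap : finrank F ↥(map g B') = finrank F ↥B' := hmapfin g ginj B' hB'le
  have hfrV'' : finrank F ↥V'' ≤ finrank F ↥B' + finrank F ↥B' := by
    rw [hV'']
    have := Submodule.finrank_sup_add_finrank_inf_eq B' (map g B')
    omega
  have hfrW₀ : finrank F ↥W₀ ≤ 2 := by
    rw [hspl]
    have h0 := Submodule.finrank_sup_add_finrank_inf_eq (span F {x}) (span F {g x})
    have h2 := auxD4_span_le (F := F) (g x)
    omega
  have hdisj : Disjoint W₀ V'' := by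
    have hs := Submodule.finrank_sup_add_finrank_inf_eq W₀ V''
    rw [hsupTop, finrank_top] at hs
    have hbot : finrank F ↥(W₀ ⊓ V'') = 0 := by omega
    exact disjoint_iff.mpr (Submodule.finrank_eq_zero.mp hbot)
  have hW₀ne : W₀ ≠ ⊥ := by
    intro hb; rw [hb] at hxW; exact hx0 (by simpa using hxW)
  -- intersections with W₀ are small
  have hBW : B ⊓ W₀ ≤ span F {x} := by
    rintro w ⟨hwB, hwW⟩
    obtain ⟨a, b, hab⟩ := Submodule.mem_span_pair.mp hwW
    have h1 : b • g x ∈ A := A.smul_mem b (key1 x)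
    have h2 : b • g x ∈ B := by
      have he : b • g x = w - a • x := by rw [← hab]; module
      rw [he]; exact B.sub_mem hwB (B.smul_mem a hxB)
    have h0 : b • g x = 0 := by
      have hm : b • g x ∈ A ⊓ B := ⟨h1, h2⟩
      rwa [cAB.disjoint.eq_bot, Submodule.mem_bot] at hm
    exact Submodule.mem_span_singleton.mpr ⟨a, by rw [← hab, h0, add_zero]⟩
  have hAW : A ⊓ W₀ ≤ span F {g x} := by
    rintro w ⟨hwA, hwW⟩
    obtain ⟨a, b, hab⟩ := Submodule.mem_span_pair.mp hwW
    have h1 : a • x ∈ B := B.smul_mem a hxB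
    have h2 : a • x ∈ A := by
      have he : a • x = w - b • g x := by rw [← hab]; module
      rw [he]; exact A.sub_mem hwA (A.smul_mem b (key1 x))
    have h0 : a • x = 0 := by
      have hm : a • x ∈ A ⊓ B := ⟨h2, h1⟩
      rwa [cAB.disjoint.eq_bot, Submodule.mem_bot] at hm
    exact Submodule.mem_span_singleton.mpr ⟨b, by rw [← hab, h0, zero_add]⟩
  have hCW : C ⊓ W₀ ≤ span F {h' x} := by
    rintro w ⟨hwC, hwW⟩
    obtain ⟨a, b, hab⟩ := Submodule.mem_span_pair.mp hwW
    have h1 : (a + b) • x ∈ B := B.smul_mem _ hxB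
    have h2 : (a + b) • x ∈ C := by
      have he : (a + b) • x = w - b • h' x := by
        rw [← hab, keyh]; module
      rw [he]; exact C.sub_mem hwC (C.smul_mem b (keyhC x))
    have h0 : (a + b) • x = 0 := by
      have hm : (a + b) • x ∈ B ⊓ C := ⟨h1, h2⟩
      rwa [cBC.disjoint.eq_bot, Submodule.mem_bot] at hm
    refine Submodule.mem_span_singleton.mpr ⟨b, ?_⟩
    have : w = (a + b) • x + b • h' x := by rw [← hab, keyh]; module
    rw [this, h0, zero_add]
  have hh'xW : h' x ∈ W₀ := by rw [keyh]; exact W₀.sub_mem hgxW hxW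
  have hmapV : map h' B' ≤ V'' := by
    rintro z ⟨y, hy, rfl⟩
    rw [keyh]
    exact V''.sub_mem (Submodule.mem_sup_right (Submodule.mem_map_of_mem hy))
      (Submodule.mem_sup_left hy)
  refine ⟨W₀, V'', ⟨hdisj, codisjoint_iff.mpr hsupTop⟩, hW₀ne, hfrW₀,
    ⟨(Submodule.finrank_mono hAW).trans (auxD4_span_le _),
     (Submodule.finrank_mono hBW).trans (auxD4_span_le _),
     (Submodule.finrank_mono hCW).trans (auxD4_span_le _)⟩, ?_, ?_, ?_⟩
  · refine le_antisymm ?_ (sup_le inf_le_left inf_le_left)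
    conv_lhs => rw [← hgB, ← hB'sup, Submodule.map_sup, hsplg]
    refine sup_le ?_ ?_
    · exact (le_inf ((Submodule.span_singleton_le_iff_mem _ _).mpr (key1 x)) hgxleW).trans
        le_sup_left
    · refine (le_inf ?_ (le_sup_right : map g B' ≤ V'')).trans le_sup_right
      rw [← hgB]; exact Submodule.map_mono hB'le
  · refine le_antisymm ?_ (sup_le inf_le_left inf_le_left)
    conv_lhs => rw [← hB'sup]
    refine sup_le ?_ ?_
    · exact (le_inf hxle hxleW).trans le_sup_left
    · exact (le_inf hB'le (le_sup_left : B' ≤ V'')).trans le_sup_right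
  · refine le_antisymm ?_ (sup_le inf_le_left inf_le_left)
    conv_lhs => rw [← hhB, ← hB'sup, Submodule.map_sup, hsplh]
    refine sup_le ?_ ?_
    · exact (le_inf ((Submodule.span_singleton_le_iff_mem _ _).mpr (keyhC x))
        ((Submodule.span_singleton_le_iff_mem _ _).mpr hh'xW)).trans le_sup_left
    · refine (le_inf ?_ hmapV).trans le_sup_right
      rw [← hhB]; exact Submodule.map_mono hB'le

lemma auxD4_step [FiniteDimensional F V] (hV : finrank F V ≠ 0)
    (U : Fin 3 → Submodule F V) :
    ∃ W₀ V'' : Submodule F V, IsCompl W₀ V'' ∧ W₀ ≠ ⊥ ∧ finrank F ↥W₀ ≤ 2 ∧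
      (∀ m, finrank F ↥(U m ⊓ W₀) ≤ 1) ∧ (∀ m, U m = (U m ⊓ W₀) ⊔ (U m ⊓ V'')) := by
  by_cases hT : U 0 ⊓ (U 1 ⊓ U 2) = ⊥
  case neg =>
    obtain ⟨v, hv, hv0⟩ := Submodule.exists_mem_ne_zero_of_ne_bot hT
    refine auxD4_vec_split U hv0 (S := ⊥) (by simpa using hv0) ?_
    intro m; fin_cases m
    exacts [Or.inl hv.1, Or.inl hv.2.1, Or.inl hv.2.2]
  by_cases h01 : U 0 ⊓ U 1 = ⊥
  case neg =>
    obtain ⟨v, hv, hv0⟩ := Submodule.exists_mem_ne_zero_of_ne_bot h01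
    have hvS : v ∉ U 2 := fun hc => hv0 (by
      have : v ∈ U 0 ⊓ (U 1 ⊓ U 2) := ⟨hv.1, hv.2, hc⟩
      rwa [hT, Submodule.mem_bot] at this)
    refine auxD4_vec_split U hv0 hvS ?_
    intro m; fin_cases m
    exacts [Or.inl hv.1, Or.inl hv.2, Or.inr le_rfl]
  by_cases h02 : U 0 ⊓ U 2 = ⊥
  case neg =>
    obtain ⟨v, hv, hv0⟩ := Submodule.exists_mem_ne_zero_of_ne_bot h02
    have hvS : v ∉ U 1 := fun hc => hv0 (by
      have : v ∈ U 0 ⊓ (U 1 ⊓ U 2) := ⟨hv.1, hc, hv.2⟩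
      rwa [hT, Submodule.mem_bot] at this)
    refine auxD4_vec_split U hv0 hvS ?_
    intro m; fin_cases m
    exacts [Or.inl hv.1, Or.inr le_rfl, Or.inl hv.2]
  by_cases h12 : U 1 ⊓ U 2 = ⊥
  case neg =>
    obtain ⟨v, hv, hv0⟩ := Submodule.exists_mem_ne_zero_of_ne_bot h12
    have hvS : v ∉ U 0 := fun hc => hv0 (by
      have : v ∈ U 0 ⊓ (U 1 ⊓ U 2) := ⟨hc, hv.1, hv.2⟩
      rwa [hT, Submodule.mem_bot] at this)
    refine auxD4_vec_split U hv0 hvS ?_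
    intro m; fin_cases m
    exacts [Or.inr le_rfl, Or.inl hv.1, Or.inl hv.2]
  by_cases hc0 : U 0 ≤ U 1 ⊔ U 2
  case neg =>
    obtain ⟨v, hv, hvS⟩ := SetLike.not_le_iff_exists.mp hc0
    have hv0 : v ≠ 0 := fun hz => hvS (hz ▸ Submodule.zero_mem _)
    refine auxD4_vec_split U hv0 hvS ?_
    intro m; fin_cases m
    exacts [Or.inl hv, Or.inr le_sup_left, Or.inr le_sup_right]
  by_cases hc1 : U 1 ≤ U 0 ⊔ U 2
  case neg =>
    obtain ⟨v, hv, hvS⟩ := SetLike.not_le_iff_exists.mp hc1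
    have hv0 : v ≠ 0 := fun hz => hvS (hz ▸ Submodule.zero_mem _)
    refine auxD4_vec_split U hv0 hvS ?_
    intro m; fin_cases m
    exacts [Or.inr le_sup_left, Or.inl hv, Or.inr le_sup_right]
  by_cases hc2 : U 2 ≤ U 0 ⊔ U 1
  case neg =>
    obtain ⟨v, hv, hvS⟩ := SetLike.not_le_iff_exists.mp hc2
    have hv0 : v ≠ 0 := fun hz => hvS (hz ▸ Submodule.zero_mem _)
    refine auxD4_vec_split U hv0 hvS ?_
    intro m; fin_cases m
    exacts [Or.inr le_sup_left, Or.inr le_sup_right, Or.inl hv]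
  by_cases htop : U 0 ⊔ (U 1 ⊔ U 2) = ⊤
  case neg =>
    have hex : ∃ v, v ∉ U 0 ⊔ (U 1 ⊔ U 2) := by
      by_contra hc; push_neg at hc
      exact htop (Submodule.eq_top_iff'.mpr hc)
    obtain ⟨v, hvS⟩ := hex
    have hv0 : v ≠ 0 := fun hz => hvS (hz ▸ Submodule.zero_mem _)
    refine auxD4_vec_split U hv0 hvS ?_
    intro m; fin_cases m
    exacts [Or.inr le_sup_left, Or.inr (le_sup_left.trans le_sup_right),
      Or.inr (le_sup_right.trans le_sup_right)]
  -- terminal case: pairwise complementary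
  have hAB : U 0 ⊔ U 1 = ⊤ := by
    rw [← top_le_iff, ← htop]
    exact sup_le le_sup_left (sup_le le_sup_right hc2)
  have hAC : U 0 ⊔ U 2 = ⊤ := by
    rw [← top_le_iff, ← htop]
    exact sup_le le_sup_left (sup_le hc1 le_sup_right)
  have hBC : U 1 ⊔ U 2 = ⊤ := by
    rw [← top_le_iff, ← htop]
    exact sup_le hc0 (sup_le le_sup_left le_sup_right)
  obtain ⟨W₀, V'', hcompl, hne, hfr2, ⟨f0, f1, f2⟩, ⟨g0, g1, g2⟩⟩ :=
    auxD4_plane_split hV (U 0) (U 1) (U 2)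
      ⟨disjoint_iff.mpr h01, codisjoint_iff.mpr hAB⟩
      ⟨disjoint_iff.mpr h02, codisjoint_iff.mpr hAC⟩
      ⟨disjoint_iff.mpr h12, codisjoint_iff.mpr hBC⟩
  refine ⟨W₀, V'', hcompl, hne, hfr2, ?_, ?_⟩
  · intro m; fin_cases m; exacts [f0, f1, f2]
  · intro m; fin_cases m; exacts [g0, g1, g2]

lemma auxD4_trivial [FiniteDimensional F V] (hV : finrank F V = 0)
    (U : Fin 3 → Submodule F V) :
    ∃ (ι : Type) (_ : Fintype ι) (W : ι → Submodule F V),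
      iSupIndep W ∧ (⨆ l, W l) = ⊤ ∧
      (∀ l, Module.finrank F ↥(W l) ≤ 2) ∧
      (∀ m l, Module.finrank F ↥(U m ⊓ W l) ≤ 1) ∧
      (∀ m, U m = ⨆ l, U m ⊓ W l) := by
  haveI : Subsingleton V := finrank_zero_iff.mp hV
  haveI : Subsingleton (Submodule F V) := inferInstance
  exact ⟨Empty, inferInstance, fun e => e.elim, fun e => e.elim,
    Subsingleton.elim _ _, fun e => e.elim, fun m e => e.elim,
    fun m => Subsingleton.elim _ _⟩

end

universe u

lemma auxD4_main {F : Type*} [Field F] (n : ℕ) :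
    ∀ (V : Type u) [AddCommGroup V] [Module F V] [FiniteDimensional F V],
    finrank F V ≤ n → ∀ U : Fin 3 → Submodule F V,
    ∃ (ι : Type) (_ : Fintype ι) (W : ι → Submodule F V),
      iSupIndep W ∧ (⨆ l, W l) = ⊤ ∧
      (∀ l, Module.finrank F ↥(W l) ≤ 2) ∧
      (∀ m l, Module.finrank F ↥(U m ⊓ W l) ≤ 1) ∧
      (∀ m, U m = ⨆ l, U m ⊓ W l) := by
  induction n with
  | zero =>
    intro V _ _ _ hn U
    exact auxD4_trivial (Nat.le_zero.mp hn) U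
  | succ n ih =>
    intro V _ _ _ hn U
    by_cases h0 : finrank F V = 0
    · exact auxD4_trivial h0 U
    obtain ⟨W₀, V'', hcompl, hne, hfr2, hfr1, hcomp⟩ := auxD4_step h0 U
    have hdims := Submodule.finrank_add_eq_of_isCompl hcompl
    have hW₀pos : finrank F ↥W₀ ≠ 0 := fun hz => hne (Submodule.finrank_eq_zero.mp hz)
    have hV''le : finrank F ↥V'' ≤ n := by omega
    obtain ⟨ι, instι, W, hind, hsup, h2, h1, hU⟩ :=
      ih ↥V'' hV''le (fun m => comap V''.subtype (U m))
    set Wm : ι → Submodule F V := fun l => map V''.subtype (W l) with hWm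
    have f1 : ∀ l, Wm l ≤ V'' := fun l => map_subtype_le V'' (W l)
    have f2 : (⨆ l, Wm l) = V'' := by
      rw [hWm]
      simp only [← Submodule.map_iSup, hsup, Submodule.map_top, Submodule.range_subtype]
    have f4 : ∀ m l, map V''.subtype (comap V''.subtype (U m) ⊓ W l) = U m ⊓ Wm l := by
      intro m l
      rw [Submodule.map_inf _ V''.injective_subtype, Submodule.map_comap_subtype,
        show map V''.subtype (W l) = Wm l from rfl, inf_comm V'' (U m), inf_assoc,
        inf_eq_right.mpr (f1 l)]
    have f5 : ∀ l, finrank F ↥(Wm l) = finrank F ↥(W l) :=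
      fun l => (LinearEquiv.finrank_eq
        (Submodule.equivMapOfInjective _ V''.injective_subtype (W l))).symm
    refine ⟨Option ι, inferInstance,
      fun o => Option.elim o W₀ Wm, ?_, ?_, ?_, ?_, ?_⟩
    · intro o
      match o with
      | none =>
        refine hcompl.disjoint.mono_right ?_
        refine iSup_le fun j => iSup_le fun hj => ?_
        match j with
        | none => exact absurd rfl hj
        | some l => exact f1 l
      | some l =>
        have hd : Disjoint (Wm l) (⨆ l', ⨆ _ : l' ≠ l, Wm l') := by
          rw [disjoint_iff]
          have : (⨆ l', ⨆ _ : l' ≠ l, Wm l') =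
              map V''.subtype (⨆ l', ⨆ _ : l' ≠ l, W l') := by
            simp only [Submodule.map_iSup]; rfl
          rw [this, ← Submodule.map_inf _ V''.injective_subtype,
            disjoint_iff.mp (hind l), Submodule.map_bot]
        have hBle : (⨆ l', ⨆ _ : l' ≠ l, Wm l') ≤ V'' :=
          iSup_le fun l' => iSup_le fun _ => f1 l'
        have hkey : Wm l ⊓ (W₀ ⊔ ⨆ l', ⨆ _ : l' ≠ l, Wm l') ≤ ⊥ := by
          have e1 : ((⨆ l', ⨆ _ : l' ≠ l, Wm l') ⊔ W₀) ⊓ V'' =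
              (⨆ l', ⨆ _ : l' ≠ l, Wm l') := by
            rw [sup_inf_assoc_of_le W₀ hBle, hcompl.disjoint.eq_bot, sup_bot_eq]
          have h3 : Wm l ⊓ (W₀ ⊔ ⨆ l', ⨆ _ : l' ≠ l, Wm l') ≤
              Wm l ⊓ (⨆ l', ⨆ _ : l' ≠ l, Wm l') := by
            refine le_inf inf_le_left ?_
            calc Wm l ⊓ (W₀ ⊔ ⨆ l', ⨆ _ : l' ≠ l, Wm l')
                ≤ ((⨆ l', ⨆ _ : l' ≠ l, Wm l') ⊔ W₀) ⊓ V'' := by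
                  rw [inf_comm]
                  exact inf_le_inf (le_of_eq (sup_comm _ _)) (f1 l)
              _ = _ := e1
          exact h3.trans (le_of_eq (disjoint_iff.mp hd))
        refine disjoint_iff.mpr (le_bot_iff.mp ?_)
        refine le_trans (inf_le_inf_left _ ?_) hkey
        refine iSup_le fun j => iSup_le fun hj => ?_
        match j with
        | none => exact le_sup_left
        | some l' =>
          have : l' ≠ l := fun he => hj (by rw [he])
          exact le_trans (le_iSup₂ (f := fun l' (_ : l' ≠ l) => Wm l') l' this) le_sup_right
    · rw [iSup_option]
      simpa [f2] using hcompl.codisjoint.eq_top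
    · intro o
      match o with
      | none => exact hfr2
      | some l => show finrank F ↥(Wm l) ≤ 2; rw [f5 l]; exact h2 l
    · intro m o
      match o with
      | none => exact hfr1 m
      | some l =>
        have : finrank F ↥(U m ⊓ Wm l) = finrank F ↥(comap V''.subtype (U m) ⊓ W l) := by
          rw [← f4 m l]
          exact (LinearEquiv.finrank_eq
            (Submodule.equivMapOfInjective _ V''.injective_subtype _)).symm
        show finrank F ↥(U m ⊓ Wm l) ≤ 1; rw [this]; exact h1 m l
    · intro m
      rw [iSup_option]
      have hs : (⨆ l, U m ⊓ Wm l) = U m ⊓ V'' := by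
        have he : (⨆ l, U m ⊓ Wm l) = map V''.subtype (⨆ l, comap V''.subtype (U m) ⊓ W l) := by
          simp only [Submodule.map_iSup, f4]
        rw [he, ← hU m, Submodule.map_comap_subtype, inf_comm]
      show U m = U m ⊓ W₀ ⊔ ⨆ l, U m ⊓ Wm l
      rw [hs, ← hcomp m]


/-- Gabriel-type decomposition of a system of three subspaces (a representation
of the `D₄` quiver with injective maps): there is a finite direct-sum
decomposition `V = ⊕ W l` compatible with each `U m` (i.e. `U m` is the direct
sum of its intersections with the summands), in which each summand has
dimension at most `2` and meets each `U m` in dimension at most `1`. -/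
theorem three_subspace_D4_decomposition {F V : Type*} [Field F] [AddCommGroup V]
    [Module F V] [FiniteDimensional F V] (U : Fin 3 → Submodule F V) :
    ∃ (ι : Type) (_ : Fintype ι) (W : ι → Submodule F V),
      iSupIndep W ∧ (⨆ l, W l) = ⊤ ∧
      (∀ l, Module.finrank F ↥(W l) ≤ 2) ∧
      (∀ m l, Module.finrank F ↥(U m ⊓ W l) ≤ 1) ∧
      (∀ m, U m = ⨆ l, U m ⊓ W l) := by
  exact auxD4_main (Module.finrank F V) V le_rfl U
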